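/- arXiv:2405.08661 — 2 statements merged into one kernel-verified Lean document; each statement's English description precedes it below -/
import Mathlib

section
/- In the tanh-network setting, the second moment of the gradient estimator is finite: for every θ ∈ Θ, E_z[‖∇_θ f(θ, z)‖²] < ∞, where ∇_θ f(θ, z) is the gradient of the loss with respect to all weights and biases for fixed input z. -/
open MeasureTheory
open scoped BigOperators

noncomputable section

/-- Parameter space of an `n`-layer fully connected network with layer widths `κ`:
for each layer `i` a weight matrix `W_i ∈ ℝ^{κ(i+1) × κ i}` and a bias `b_i ∈ ℝ^{κ(i+1)}`. -/
abbrev NNParams (κ : ℕ → ℕ) (n : ℕ) :=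
  (i : Fin n) → ((Fin (κ (i.1 + 1)) → Fin (κ i.1) → ℝ) × (Fin (κ (i.1 + 1)) → ℝ))

/-- The layers of the tanh network: `x₀ = z`, `x_{i+1} = tanh(W_{i+1} x_i + b_{i+1})`
entrywise for the hidden layers `i + 1 ≤ n - 1`, and the affine output layer
`x_n = W_n x_{n-1} + b_n` (junk value `0` beyond layer `n`). -/
def tanhNet (κ : ℕ → ℕ) (n : ℕ) (θ : NNParams κ n) (z : Fin (κ 0) → ℝ) :
    (i : ℕ) → Fin (κ i) → ℝ
  | 0 => z
  | (i + 1) =>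
    if h : i < n then
      fun j =>
        let pre := (∑ l, (θ ⟨i, h⟩).1 j l * tanhNet κ n θ z i l) + (θ ⟨i, h⟩).2 j
        if i + 2 ≤ n then Real.tanh pre else pre
    else 0

/-- Squared-error loss `f(θ,z) = ‖x_n(θ,z) − f̂(z)‖²` of the tanh network. -/
def tanhLoss (κ : ℕ → ℕ) (n : ℕ) (fhat : (Fin (κ 0) → ℝ) → (Fin (κ n) → ℝ))
    (θ : NNParams κ n) (z : Fin (κ 0) → ℝ) : ℝ :=
  ∑ j, (tanhNet κ n θ z n j - fhat z j) ^ 2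

/-- The standard Gaussian measure on `ℝ^d` (i.i.d. `N(0,1)` coordinates). -/
def stdGaussian (d : ℕ) : Measure (Fin d → ℝ) :=
  Measure.pi fun _ => ProbabilityTheory.gaussianReal 0 1

section AuxGrad
open Real ProbabilityTheory

def evalW (κ : ℕ → ℕ) (n : ℕ) (i : Fin n) (j : Fin (κ (i.1 + 1))) (l : Fin (κ i.1)) :
    NNParams κ n →L[ℝ] ℝ :=
  (ContinuousLinearMap.proj (R := ℝ) (φ := fun _ : Fin (κ i.1) => ℝ) l).comp
    ((ContinuousLinearMap.proj (R := ℝ) (φ := fun _ : Fin (κ (i.1 + 1)) => (Fin (κ i.1) → ℝ)) j).comp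
      ((ContinuousLinearMap.fst ℝ (Fin (κ (i.1 + 1)) → Fin (κ i.1) → ℝ) (Fin (κ (i.1 + 1)) → ℝ)).comp
        (ContinuousLinearMap.proj (R := ℝ)
          (φ := fun i : Fin n => (Fin (κ (i.1 + 1)) → Fin (κ i.1) → ℝ) × (Fin (κ (i.1 + 1)) → ℝ)) i)))

def evalB (κ : ℕ → ℕ) (n : ℕ) (i : Fin n) (j : Fin (κ (i.1 + 1))) :
    NNParams κ n →L[ℝ] ℝ :=
  (ContinuousLinearMap.proj (R := ℝ) (φ := fun _ : Fin (κ (i.1 + 1)) => ℝ) j).comp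
    ((ContinuousLinearMap.snd ℝ (Fin (κ (i.1 + 1)) → Fin (κ i.1) → ℝ) (Fin (κ (i.1 + 1)) → ℝ)).comp
      (ContinuousLinearMap.proj (R := ℝ)
        (φ := fun i : Fin n => (Fin (κ (i.1 + 1)) → Fin (κ i.1) → ℝ) × (Fin (κ (i.1 + 1)) → ℝ)) i))

lemma evalW_apply (κ : ℕ → ℕ) (n : ℕ) (i : Fin n) (j : Fin (κ (i.1 + 1))) (l : Fin (κ i.1))
    (θ : NNParams κ n) : evalW κ n i j l θ = (θ i).1 j l := rfl

lemma evalB_apply (κ : ℕ → ℕ) (n : ℕ) (i : Fin n) (j : Fin (κ (i.1 + 1)))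
    (θ : NNParams κ n) : evalB κ n i j θ = (θ i).2 j := rfl

lemma abs_param_W_le (κ : ℕ → ℕ) (n : ℕ) (i : Fin n) (j : Fin (κ (i.1 + 1))) (l : Fin (κ i.1))
    (θ : NNParams κ n) : |(θ i).1 j l| ≤ ‖θ‖ := by
  calc |(θ i).1 j l| = ‖(θ i).1 j l‖ := rfl
    _ ≤ ‖(θ i).1 j‖ := norm_le_pi_norm _ l
    _ ≤ ‖(θ i).1‖ := norm_le_pi_norm _ j
    _ ≤ ‖θ i‖ := norm_fst_le (θ i)
    _ ≤ ‖θ‖ := norm_le_pi_norm θ i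

lemma abs_param_b_le (κ : ℕ → ℕ) (n : ℕ) (i : Fin n) (j : Fin (κ (i.1 + 1)))
    (θ : NNParams κ n) : |(θ i).2 j| ≤ ‖θ‖ := by
  calc |(θ i).2 j| = ‖(θ i).2 j‖ := rfl
    _ ≤ ‖(θ i).2‖ := norm_le_pi_norm _ j
    _ ≤ ‖θ i‖ := norm_snd_le (θ i)
    _ ≤ ‖θ‖ := norm_le_pi_norm θ i

lemma norm_evalW_le (κ : ℕ → ℕ) (n : ℕ) (i : Fin n) (j : Fin (κ (i.1 + 1))) (l : Fin (κ i.1)) :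
    ‖evalW κ n i j l‖ ≤ 1 :=
  ContinuousLinearMap.opNorm_le_bound _ zero_le_one fun θ => by
    rw [one_mul]; exact abs_param_W_le κ n i j l θ

lemma norm_evalB_le (κ : ℕ → ℕ) (n : ℕ) (i : Fin n) (j : Fin (κ (i.1 + 1))) :
    ‖evalB κ n i j‖ ≤ 1 :=
  ContinuousLinearMap.opNorm_le_bound _ zero_le_one fun θ => by
    rw [one_mul]; exact abs_param_b_le κ n i j θ

lemma my_abs_tanh_le' (x : ℝ) : |Real.tanh x| ≤ 1 := by
  rw [Real.tanh_eq_sinh_div_cosh, abs_div, abs_of_pos (Real.cosh_pos x),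
    div_le_one (Real.cosh_pos x)]
  rw [Real.sinh_eq, Real.cosh_eq, abs_le]
  constructor <;> nlinarith [Real.exp_pos x, Real.exp_pos (-x)]

lemma my_tanh_deriv' (x : ℝ) :
    HasDerivAt Real.tanh ((Real.cosh x ^ 2)⁻¹) x := by
  have h := (Real.hasDerivAt_sinh x).div (Real.hasDerivAt_cosh x) (Real.cosh_pos x).ne'
  have e : (Real.cosh x * Real.cosh x - Real.sinh x * Real.sinh x) / Real.cosh x ^ 2
      = (Real.cosh x ^ 2)⁻¹ := by
    have h2 := Real.cosh_sq_sub_sinh_sq x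
    have h3 : Real.cosh x * Real.cosh x - Real.sinh x * Real.sinh x = 1 := by nlinarith
    rw [h3]; rw [one_div]
  rw [e] at h
  have : Real.tanh = fun y => Real.sinh y / Real.cosh y := funext Real.tanh_eq_sinh_div_cosh
  rw [this]
  exact h

lemma my_tanh_deriv_bound' (x : ℝ) : |(Real.cosh x ^ 2)⁻¹| ≤ 1 := by
  rw [abs_of_nonneg (by positivity), inv_le_one_iff₀]
  right
  nlinarith [Real.one_le_cosh x]

set_option maxHeartbeats 2000000 in
lemma net_deriv (κ : ℕ → ℕ) (n : ℕ) (θ : NNParams κ n) :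
    ∀ i : ℕ, i ≤ n →
    ∃ (c : ℝ) (D : Fin (κ i) → (Fin (κ 0) → ℝ) → (NNParams κ n →L[ℝ] ℝ)),
      0 ≤ c ∧
      (∀ j, Continuous fun z => tanhNet κ n θ z i j) ∧
      (∀ j z, |tanhNet κ n θ z i j| ≤ c * (1 + ‖z‖)) ∧
      (∀ j, Continuous (D j)) ∧
      (∀ j z, HasFDerivAt (fun θ' => tanhNet κ n θ' z i j) (D j z) θ) ∧
      (∀ j z, ‖D j z‖ ≤ c * (1 + ‖z‖)) := by
  intro i
  induction i with
  | zero =>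
    intro _
    refine ⟨1, fun j z => 0, zero_le_one, fun j => continuous_apply j, ?_, ?_, ?_, ?_⟩
    · intro j z
      have h1 : |z j| ≤ ‖z‖ := norm_le_pi_norm z j
      have h2 : (0:ℝ) ≤ ‖z‖ := norm_nonneg z
      show |z j| ≤ 1 * (1 + ‖z‖)
      linarith
    · intro j; exact continuous_const
    · intro j z; exact hasFDerivAt_const (z j) θ
    · intro j z
      simp only [norm_zero, one_mul]
      positivity
  | succ i ih =>
    intro hin
    have h : i < n := hin
    obtain ⟨c, D, hc, hcont, hval, hDcont, hDderiv, hDbound⟩ := ih (Nat.le_of_succ_le hin)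
    have hθ : (0:ℝ) ≤ ‖θ‖ := norm_nonneg θ
    set pre : NNParams κ n → (Fin (κ 0) → ℝ) → Fin (κ (i+1)) → ℝ :=
      fun θ' z j => (∑ l, (θ' ⟨i, h⟩).1 j l * tanhNet κ n θ' z i l) + (θ' ⟨i, h⟩).2 j with hpre
    have hunfold : ∀ (θ' : NNParams κ n) z j, tanhNet κ n θ' z (i+1) j
        = if i + 2 ≤ n then Real.tanh (pre θ' z j) else pre θ' z j := by
      intro θ' z j
      simp only [tanhNet, dif_pos h, hpre]
    set Dpre : Fin (κ (i+1)) → (Fin (κ 0) → ℝ) → (NNParams κ n →L[ℝ] ℝ) :=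
      fun j z => (∑ l, (((θ ⟨i,h⟩).1 j l) • D l z + (tanhNet κ n θ z i l) • evalW κ n ⟨i,h⟩ j l))
        + evalB κ n ⟨i,h⟩ j with hDpre
    have hpre_cont : ∀ j, Continuous fun z => pre θ z j := by
      intro j
      apply Continuous.add
      · exact continuous_finset_sum _ fun l _ => continuous_const.mul (hcont l)
      · exact continuous_const
    have hpre_deriv : ∀ j z, HasFDerivAt (fun θ' => pre θ' z j) (Dpre j z) θ := by
      intro j z
      apply HasFDerivAt.add
      · apply HasFDerivAt.fun_sum
        intro l _
        have h1 : HasFDerivAt (fun θ' : NNParams κ n => evalW κ n ⟨i,h⟩ j l θ')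
            (evalW κ n ⟨i,h⟩ j l) θ := (evalW κ n ⟨i,h⟩ j l).hasFDerivAt
        have h2 := hDderiv l z
        have h3 := h1.mul h2
        rw [evalW_apply] at h3
        exact h3
      · exact (evalB κ n ⟨i,h⟩ j).hasFDerivAt
    have hDpre_cont : ∀ j, Continuous (Dpre j) := by
      intro j
      apply Continuous.add
      · apply continuous_finset_sum
        intro l _
        exact ((hDcont l).fun_const_smul _).fun_add ((hcont l).fun_smul continuous_const)
      · exact continuous_const
    have hDpre_bound : ∀ j z, ‖Dpre j z‖ ≤ ((κ i : ℝ) * c * (1 + ‖θ‖)) * (1 + ‖z‖) + 1 := by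
      intro j z
      have hz : (0:ℝ) ≤ 1 + ‖z‖ := by positivity
      simp only [hDpre]
      calc ‖(fun (j : Fin (κ (i+1))) (z : Fin (κ 0) → ℝ) =>
            (∑ l, (((θ ⟨i,h⟩).1 j l) • D l z + (tanhNet κ n θ z i l) • evalW κ n ⟨i,h⟩ j l))
              + evalB κ n ⟨i,h⟩ j) j z‖
          ≤ ‖∑ l, (((θ ⟨i,h⟩).1 j l) • D l z + (tanhNet κ n θ z i l) • evalW κ n ⟨i,h⟩ j l)‖
            + ‖evalB κ n ⟨i,h⟩ j‖ := norm_add_le _ _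
        _ ≤ (∑ l, ‖((θ ⟨i,h⟩).1 j l) • D l z + (tanhNet κ n θ z i l) • evalW κ n ⟨i,h⟩ j l‖)
            + 1 := add_le_add (norm_sum_le _ _) (norm_evalB_le κ n ⟨i,h⟩ j)
        _ ≤ (∑ _l : Fin (κ i), (c * (1 + ‖θ‖)) * (1 + ‖z‖)) + 1 := by
            apply add_le_add_left
            apply Finset.sum_le_sum
            intro l _
            calc ‖((θ ⟨i,h⟩).1 j l) • D l z + (tanhNet κ n θ z i l) • evalW κ n ⟨i,h⟩ j l‖
                ≤ ‖(θ ⟨i,h⟩).1 j l‖ * ‖D l z‖ + ‖tanhNet κ n θ z i l‖ * ‖evalW κ n ⟨i,h⟩ j l‖ :=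
                  (norm_add_le _ _).trans (add_le_add (ContinuousLinearMap.opNorm_smul_le _ _) (ContinuousLinearMap.opNorm_smul_le _ _))
              _ ≤ ‖θ‖ * (c * (1 + ‖z‖)) + (c * (1 + ‖z‖)) * 1 := by
                  apply add_le_add
                  · rw [Real.norm_eq_abs]
                    exact mul_le_mul (abs_param_W_le κ n ⟨i,h⟩ j l θ) (hDbound l z)
                      (norm_nonneg _) hθ
                  · rw [Real.norm_eq_abs]
                    exact mul_le_mul (hval l z) (norm_evalW_le κ n ⟨i,h⟩ j l)
                      (norm_nonneg _) (by positivity)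
              _ = (c * (1 + ‖θ‖)) * (1 + ‖z‖) := by ring
        _ = ((κ i : ℝ) * c * (1 + ‖θ‖)) * (1 + ‖z‖) + 1 := by
            rw [Finset.sum_const, Finset.card_univ, Fintype.card_fin, nsmul_eq_mul]
            ring
    refine ⟨(κ i : ℝ) * c * (1 + ‖θ‖) + ‖θ‖ + 1,
      fun j z => if i + 2 ≤ n then ((Real.cosh (pre θ z j) ^ 2)⁻¹) • Dpre j z else Dpre j z,
      by positivity, ?_, ?_, ?_, ?_, ?_⟩
    · -- continuity of net
      intro j
      have : (fun z => tanhNet κ n θ z (i+1) j)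
          = fun z => if i + 2 ≤ n then Real.tanh (pre θ z j) else pre θ z j :=
        funext fun z => hunfold θ z j
      rw [this]
      by_cases hcase : i + 2 ≤ n
      · simp only [if_pos hcase]
        have htanh : Continuous Real.tanh := by
          rw [funext Real.tanh_eq_sinh_div_cosh]
          exact Real.continuous_sinh.div Real.continuous_cosh fun x => (Real.cosh_pos x).ne'
        exact htanh.comp (hpre_cont j)
      · simp only [if_neg hcase]
        exact hpre_cont j
    · -- value bound
      intro j z
      have hz : (0:ℝ) ≤ ‖z‖ := norm_nonneg z
      rw [hunfold θ z j]
      by_cases hcase : i + 2 ≤ n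
      · simp only [if_pos hcase]
        have := my_abs_tanh_le' (pre θ z j)
        have hk : (0:ℝ) ≤ (κ i : ℝ) * c * (1 + ‖θ‖) := by positivity
        nlinarith
      · simp only [if_neg hcase]
        have h1 : |pre θ z j| ≤ (κ i : ℝ) * (‖θ‖ * (c * (1 + ‖z‖))) + ‖θ‖ := by
          calc |pre θ z j| ≤ |∑ l, (θ ⟨i,h⟩).1 j l * tanhNet κ n θ z i l| + |(θ ⟨i,h⟩).2 j| :=
              abs_add_le _ _
            _ ≤ (∑ l, |(θ ⟨i,h⟩).1 j l * tanhNet κ n θ z i l|) + ‖θ‖ := by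
                exact add_le_add (Finset.abs_sum_le_sum_abs _ _) (abs_param_b_le κ n ⟨i,h⟩ j θ)
            _ ≤ (∑ _l : Fin (κ i), ‖θ‖ * (c * (1 + ‖z‖))) + ‖θ‖ := by
                apply add_le_add_left
                apply Finset.sum_le_sum
                intro l _
                rw [abs_mul]
                exact mul_le_mul (abs_param_W_le κ n ⟨i,h⟩ j l θ) (hval l z)
                  (abs_nonneg _) hθ
            _ = (κ i : ℝ) * (‖θ‖ * (c * (1 + ‖z‖))) + ‖θ‖ := by
                rw [Finset.sum_const, Finset.card_univ, Fintype.card_fin, nsmul_eq_mul]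
        have hk : (0:ℝ) ≤ (κ i : ℝ) * c := by positivity
        nlinarith
    · -- continuity of D
      intro j
      by_cases hcase : i + 2 ≤ n
      · simp only [if_pos hcase]
        have hcosh : Continuous fun z => ((Real.cosh (pre θ z j)) ^ 2)⁻¹ := by
          apply Continuous.inv₀
          · exact (Real.continuous_cosh.comp (hpre_cont j)).pow 2
          · intro z
            exact pow_ne_zero 2 (Real.cosh_pos (pre θ z j)).ne'
        exact hcosh.smul (hDpre_cont j)
      · simp only [if_neg hcase]
        exact hDpre_cont j
    · -- derivative
      intro j z
      have : (fun θ' => tanhNet κ n θ' z (i+1) j)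
          = fun θ' => if i + 2 ≤ n then Real.tanh (pre θ' z j) else pre θ' z j :=
        funext fun θ' => hunfold θ' z j
      rw [this]
      by_cases hcase : i + 2 ≤ n
      · simp only [if_pos hcase]
        exact (my_tanh_deriv' (pre θ z j)).comp_hasFDerivAt θ (hpre_deriv j z)
      · simp only [if_neg hcase]
        exact hpre_deriv j z
    · -- derivative bound
      intro j z
      have hz : (0:ℝ) ≤ ‖z‖ := norm_nonneg z
      have hb := hDpre_bound j z
      have hk : (0:ℝ) ≤ (κ i : ℝ) * c * (1 + ‖θ‖) := by positivity
      by_cases hcase : i + 2 ≤ n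
      · simp only [if_pos hcase]
        have h1 := my_tanh_deriv_bound' (pre θ z j)
        have h2 : (0:ℝ) ≤ ‖Dpre j z‖ := norm_nonneg _
        have h0 : ‖((Real.cosh (pre θ z j) ^ 2)⁻¹) • Dpre j z‖
            ≤ ‖(Real.cosh (pre θ z j) ^ 2)⁻¹‖ * ‖Dpre j z‖ :=
          ContinuousLinearMap.opNorm_smul_le _ _
        rw [Real.norm_eq_abs] at h0
        have h3 : |(Real.cosh (pre θ z j) ^ 2)⁻¹| * ‖Dpre j z‖ ≤ ‖Dpre j z‖ := by
          nlinarith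
        nlinarith
      · simp only [if_neg hcase]
        nlinarith

lemma my_integrable_abs_pow_gaussian (m : ℕ) :
    Integrable (fun x : ℝ => |x| ^ m) (gaussianReal 0 1) := by
  rw [gaussianReal_of_var_ne_zero 0 one_ne_zero,
    integrable_withDensity_iff (measurable_gaussianPDF 0 1)
      (Filter.Eventually.of_forall fun x => ENNReal.ofReal_lt_top)]
  have hpdf : ∀ x : ℝ, (gaussianPDF 0 1 x).toReal
      = (Real.sqrt (2 * π))⁻¹ * Real.exp (-(2⁻¹ : ℝ) * x ^ 2) := by
    intro x
    rw [gaussianPDF, ENNReal.toReal_ofReal (gaussianPDFReal_nonneg 0 1 x), gaussianPDFReal]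
    norm_num
    left; ring
  simp only [hpdf]
  have heq : (fun x : ℝ => |x| ^ m * ((Real.sqrt (2 * π))⁻¹ * Real.exp (-(2⁻¹ : ℝ) * x ^ 2)))
      = fun x : ℝ => (Real.sqrt (2 * π))⁻¹ * (|x| ^ m * Real.exp (-(2⁻¹ : ℝ) * x ^ 2)) := by
    funext x; ring
  rw [heq]
  apply Integrable.const_mul
  have hg : Integrable (fun x : ℝ => Real.exp (-(2⁻¹ : ℝ) * x ^ 2)
      + (4 ^ m * (m.factorial : ℝ)) * Real.exp (-(4⁻¹ : ℝ) * x ^ 2)) volume := by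
    exact (integrable_exp_neg_mul_sq (by norm_num)).add
      ((integrable_exp_neg_mul_sq (by norm_num)).const_mul _)
  apply hg.mono'
  · apply Measurable.aestronglyMeasurable
    exact ((measurable_id.abs.pow measurable_const).mul
      ((measurable_id.pow measurable_const).const_mul _).exp)
  · filter_upwards with x
    have h1 : |x| ^ m ≤ 1 + (4 : ℝ) ^ m * (m.factorial : ℝ) * Real.exp ((4⁻¹ : ℝ) * x ^ 2) := by
      have h2 : ((4⁻¹ : ℝ) * x ^ 2) ^ m / (m.factorial : ℝ) ≤ Real.exp ((4⁻¹ : ℝ) * x ^ 2) :=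
        Real.pow_div_factorial_le_exp (x := (4⁻¹ : ℝ) * x ^ 2) (by positivity) m
      have hfac : (0 : ℝ) < (m.factorial : ℝ) := by exact_mod_cast m.factorial_pos
      have h3 : |x| ^ (2 * m) ≤ (4 : ℝ) ^ m * (m.factorial : ℝ) * Real.exp ((4⁻¹ : ℝ) * x ^ 2) := by
        have : ((4⁻¹ : ℝ) * x ^ 2) ^ m = (4 : ℝ)⁻¹ ^ m * |x| ^ (2 * m) := by
          rw [mul_pow, pow_mul, sq_abs]
        rw [div_le_iff₀ hfac] at h2
        rw [this] at h2
        have h4 : (0 : ℝ) < (4:ℝ)⁻¹ ^ m := by positivity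
        calc |x| ^ (2*m) = ((4:ℝ)⁻¹ ^ m * |x| ^ (2*m)) * (4:ℝ) ^ m := by
              rw [mul_comm ((4:ℝ)⁻¹ ^ m) _, mul_assoc, ← mul_pow]; norm_num
          _ ≤ (Real.exp ((4⁻¹ : ℝ) * x ^ 2) * (m.factorial : ℝ)) * (4:ℝ) ^ m := by
              apply mul_le_mul_of_nonneg_right h2 (by positivity)
          _ = (4 : ℝ) ^ m * (m.factorial : ℝ) * Real.exp ((4⁻¹ : ℝ) * x ^ 2) := by ring
      rcases le_total (|x|) 1 with h | h
      · have : |x| ^ m ≤ 1 := pow_le_one₀ (abs_nonneg x) h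
        have : (0:ℝ) ≤ (4 : ℝ) ^ m * (m.factorial : ℝ) * Real.exp ((4⁻¹ : ℝ) * x ^ 2) := by positivity
        linarith
      · have : |x| ^ m ≤ |x| ^ (2 * m) := pow_le_pow_right₀ h (by omega)
        linarith
    rw [Real.norm_eq_abs, abs_of_nonneg (by positivity)]
    calc |x| ^ m * Real.exp (-(2⁻¹:ℝ) * x ^ 2)
        ≤ (1 + (4 : ℝ) ^ m * (m.factorial : ℝ) * Real.exp ((4⁻¹ : ℝ) * x ^ 2))
            * Real.exp (-(2⁻¹:ℝ) * x ^ 2) := by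
          apply mul_le_mul_of_nonneg_right h1 (Real.exp_nonneg _)
      _ = Real.exp (-(2⁻¹:ℝ) * x ^ 2)
            + (4 ^ m * (m.factorial : ℝ)) * (Real.exp ((4⁻¹ : ℝ) * x ^ 2) * Real.exp (-(2⁻¹:ℝ) * x ^ 2)) := by
          ring
      _ = Real.exp (-(2⁻¹:ℝ) * x ^ 2) + (4 ^ m * (m.factorial : ℝ)) * Real.exp (-(4⁻¹:ℝ) * x ^ 2) := by
          rw [← Real.exp_add]; ring_nf

lemma my_measurePreserving_eval {ι : Type*} [Fintype ι] {α : ι → Type*}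
    [∀ i, MeasurableSpace (α i)] (μ : ∀ i, Measure (α i)) [∀ i, IsProbabilityMeasure (μ i)]
    (k : ι) : MeasurePreserving (Function.eval k) (Measure.pi μ) (μ k) := by
  classical
  refine ⟨measurable_pi_apply k, ?_⟩
  ext s hs
  rw [Measure.map_apply (measurable_pi_apply k) hs]
  have hpre : Function.eval k ⁻¹' s
      = Set.pi Set.univ (Function.update (fun i => (Set.univ : Set (α i))) k s) := by
    ext z
    simp only [Set.mem_preimage, Set.mem_pi, Set.mem_univ, forall_true_left,
      Function.update_apply]
    constructor
    · intro h i
      by_cases hik : i = k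
      · subst hik; simpa using h
      · simp [hik]
    · intro h; have := h k; simpa using this
  rw [hpre, Measure.pi_pi]
  rw [Finset.prod_eq_single k]
  · simp
  · intro i _ hik; simp [Function.update_apply, hik]
  · simp


instance (d : ℕ) : IsProbabilityMeasure (stdGaussian d) := by
  unfold _root_.stdGaussian; infer_instance

lemma my_integrable_eval_pow (d : ℕ) (k : Fin d) (m : ℕ) :
    Integrable (fun z : Fin d → ℝ => |z k| ^ m) (stdGaussian d) := by
  have h := my_measurePreserving_eval (fun _ : Fin d => gaussianReal 0 1) k
  have heq : (fun z : Fin d → ℝ => |z k| ^ m) = (fun x : ℝ => |x| ^ m) ∘ (Function.eval k) := rfl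
  unfold _root_.stdGaussian
  have hm : Measurable fun x : ℝ => |x| ^ m := by measurability
  rw [heq, h.integrable_comp hm.aestronglyMeasurable]
  exact my_integrable_abs_pow_gaussian m

end AuxGrad

set_option maxHeartbeats 1000000 in
/-- **Finite second moment of the gradient estimator for the tanh network
(Theorem 2.4, item 2).**  For every `θ ∈ Θ`, `E_z[‖∇_θ f(θ,z)‖²] < ∞`, where
`∇_θ f(θ,z)` is the derivative of the loss with respect to all weights and biases
for fixed input `z`. -/
theorem stmt_8 (κ : ℕ → ℕ) (n : ℕ) (hn : 1 ≤ n)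
    (fhat : (Fin (κ 0) → ℝ) → (Fin (κ n) → ℝ)) (hfhat : Measurable fhat)
    (hmom0 : Integrable (fun z => ∑ j, (fhat z j) ^ 2) (stdGaussian (κ 0)))
    (hmom1 : ∀ k : Fin (κ 0),
      Integrable (fun z => (∑ j, (fhat z j) ^ 2) * |z k|) (stdGaussian (κ 0)))
    (hmom2 : ∀ k : Fin (κ 0),
      Integrable (fun z => (∑ j, (fhat z j) ^ 2) * |z k| ^ 2) (stdGaussian (κ 0)))
    (Θ : Set (NNParams κ n)) (hΘb : Bornology.IsBounded Θ) (hΘc : Convex ℝ Θ) :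
    ∀ θ ∈ Θ,
      Integrable (fun z => ‖fderiv ℝ (fun θ' => tanhLoss κ n fhat θ' z) θ‖ ^ 2)
        (stdGaussian (κ 0)) := by
  intro θ hθΘ
  obtain ⟨c, D, hc, hcont, hval, hDcont, hDderiv, hDbound⟩ := net_deriv κ n θ n le_rfl
  set F : (Fin (κ 0) → ℝ) → ℝ := fun z => ∑ j, (fhat z j) ^ 2 with hF
  set S : (Fin (κ 0) → ℝ) → ℝ := fun z => ∑ k, (z k) ^ 2 with hS
  set K0 : ℝ := (κ 0 : ℝ) with hK0
  have hK0nn : 0 ≤ K0 := by rw [hK0]; positivity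
  have hFnn : ∀ z, 0 ≤ F z := fun z => by
    simp only [hF]; exact Finset.sum_nonneg fun j _ => sq_nonneg _
  have hSnn : ∀ z, 0 ≤ S z := fun z => by
    simp only [hS]; exact Finset.sum_nonneg fun k _ => sq_nonneg _
  set DL : (Fin (κ 0) → ℝ) → (NNParams κ n →L[ℝ] ℝ) :=
    fun z => ∑ j, (2 * (tanhNet κ n θ z n j - fhat z j)) • D j z with hDL
  -- the loss has derivative DL z at θ
  have hLderiv : ∀ z, HasFDerivAt (fun θ' => tanhLoss κ n fhat θ' z) (DL z) θ := by
    intro z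
    have hfun : (fun θ' => tanhLoss κ n fhat θ' z)
        = fun θ' => ∑ j, (tanhNet κ n θ' z n j - fhat z j) ^ 2 := rfl
    rw [hfun, hDL]
    apply HasFDerivAt.fun_sum
    intro j _
    have h1 := (hDderiv j z).sub_const (fhat z j)
    have h2 := h1.mul h1
    have hsq : (fun θ' : NNParams κ n => (tanhNet κ n θ' z n j - fhat z j) ^ 2)
        = fun θ' => (tanhNet κ n θ' z n j - fhat z j) * (tanhNet κ n θ' z n j - fhat z j) := by
      funext θ'; ring
    rw [hsq]
    have heq : (2 * (tanhNet κ n θ z n j - fhat z j)) • D j z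
        = (tanhNet κ n θ z n j - fhat z j) • D j z
          + (tanhNet κ n θ z n j - fhat z j) • D j z := by
      rw [two_mul, add_smul]
    rw [heq]
    exact h2
  have hfd : (fun z => ‖fderiv ℝ (fun θ' => tanhLoss κ n fhat θ' z) θ‖ ^ 2)
      = fun z => ‖DL z‖ ^ 2 := funext fun z => by rw [(hLderiv z).fderiv]
  rw [hfd]
  -- measurability
  have hDLsm : StronglyMeasurable DL := by
    rw [hDL]
    apply Finset.stronglyMeasurable_fun_sum
    intro j _
    apply StronglyMeasurable.fun_smul
    · apply StronglyMeasurable.const_mul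
      exact (hcont j).stronglyMeasurable.sub
        ((measurable_pi_apply j).comp hfhat).stronglyMeasurable
    · exact (hDcont j).stronglyMeasurable
  have hmeas : AEStronglyMeasurable (fun z => ‖DL z‖ ^ 2) (stdGaussian (κ 0)) := by
    have heq2 : (fun z => ‖DL z‖ ^ 2) = fun z => ‖DL z‖ * ‖DL z‖ := by funext z; ring
    rw [heq2]
    exact (hDLsm.norm.mul hDLsm.norm).aestronglyMeasurable
  -- integrable majorant
  set A : ℝ := 8 * (κ n : ℝ)^2 * c^4 with hA
  set B : ℝ := 8 * (κ n : ℝ) * c^2 with hB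
  have hAnn : 0 ≤ A := by rw [hA]; positivity
  have hBnn : 0 ≤ B := by rw [hB]; positivity
  set H : (Fin (κ 0) → ℝ) → ℝ :=
    fun z => A * (4 + ((8 * K0) * S z + (4 * (K0 * K0)) * (S z * S z)))
      + B * (2 * F z + (2 * K0) * (S z * F z)) with hH
  have hSint : Integrable S (stdGaussian (κ 0)) := by
    rw [hS]
    apply integrable_finset_sum
    intro k _
    have h := my_integrable_eval_pow (κ 0) k 2
    simpa [sq_abs] using h
  have hSSint : Integrable (fun z => S z * S z) (stdGaussian (κ 0)) := by
    have hrw : (fun z : Fin (κ 0) → ℝ => S z * S z)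
        = fun z => ∑ k, ∑ l, (z k) ^ 2 * (z l) ^ 2 := by
      funext z; simp only [hS]; rw [Finset.sum_mul_sum]
    rw [hrw]
    apply integrable_finset_sum
    intro k _
    apply integrable_finset_sum
    intro l _
    have hmaj : Integrable (fun z : Fin (κ 0) → ℝ => 2⁻¹ * (|z k| ^ 4 + |z l| ^ 4))
        (stdGaussian (κ 0)) :=
      ((my_integrable_eval_pow (κ 0) k 4).add (my_integrable_eval_pow (κ 0) l 4)).const_mul _
    apply hmaj.mono'
    · exact (((measurable_pi_apply k).pow_const 2).mul
        ((measurable_pi_apply l).pow_const 2)).aestronglyMeasurable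
    · filter_upwards with z
      rw [Real.norm_eq_abs, abs_of_nonneg (by positivity)]
      have h1 : (z k)^2 * (z l)^2 ≤ 2⁻¹ * ((z k)^4 + (z l)^4) := by
        nlinarith [sq_nonneg ((z k)^2 - (z l)^2)]
      calc (z k)^2 * (z l)^2 ≤ 2⁻¹ * ((z k)^4 + (z l)^4) := h1
        _ = 2⁻¹ * (|z k| ^ 4 + |z l| ^ 4) := by
            rw [← abs_pow, ← abs_pow,
              abs_of_nonneg (by positivity : (0:ℝ) ≤ (z k)^4),
              abs_of_nonneg (by positivity : (0:ℝ) ≤ (z l)^4)]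
  have hSFint : Integrable (fun z => S z * F z) (stdGaussian (κ 0)) := by
    have hrw : (fun z : Fin (κ 0) → ℝ => S z * F z)
        = fun z => ∑ k, (∑ j, (fhat z j) ^ 2) * |z k| ^ 2 := by
      funext z
      simp only [hS, hF]
      rw [Finset.sum_mul]
      apply Finset.sum_congr rfl
      intro k _
      rw [sq_abs]; ring
    rw [hrw]
    exact integrable_finset_sum _ fun k _ => hmom2 k
  have hHint : Integrable H (stdGaussian (κ 0)) := by
    rw [hH]
    have hm0 : Integrable F (stdGaussian (κ 0)) := hmom0
    exact (((integrable_const (4:ℝ)).add ((hSint.const_mul (8 * K0)).add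
        (hSSint.const_mul (4 * (K0 * K0))))).const_mul A).add
      (((hm0.const_mul 2).add (hSFint.const_mul (2 * K0))).const_mul B)
  -- pointwise bound
  apply hHint.mono' hmeas
  filter_upwards with z
  rw [Real.norm_eq_abs, abs_of_nonneg (sq_nonneg _)]
  have hz : (0:ℝ) ≤ ‖z‖ := norm_nonneg z
  set T : ℝ := ∑ j, |tanhNet κ n θ z n j - fhat z j| with hT
  have hTnn : 0 ≤ T := by
    rw [hT]; exact Finset.sum_nonneg fun j _ => abs_nonneg _
  have h1 : ‖DL z‖ ≤ 2 * (c * (1 + ‖z‖)) * T := by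
    rw [hDL, hT]
    calc ‖∑ j, (2 * (tanhNet κ n θ z n j - fhat z j)) • D j z‖
        ≤ ∑ j, ‖(2 * (tanhNet κ n θ z n j - fhat z j)) • D j z‖ := norm_sum_le _ _
      _ ≤ ∑ j, 2 * (c * (1 + ‖z‖)) * |tanhNet κ n θ z n j - fhat z j| := by
          apply Finset.sum_le_sum
          intro j _
          calc ‖(2 * (tanhNet κ n θ z n j - fhat z j)) • D j z‖
              ≤ ‖2 * (tanhNet κ n θ z n j - fhat z j)‖ * ‖D j z‖ :=
                ContinuousLinearMap.opNorm_smul_le _ _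
            _ ≤ |2 * (tanhNet κ n θ z n j - fhat z j)| * (c * (1 + ‖z‖)) := by
                rw [Real.norm_eq_abs]
                exact mul_le_mul_of_nonneg_left (hDbound j z) (abs_nonneg _)
            _ = 2 * (c * (1 + ‖z‖)) * |tanhNet κ n θ z n j - fhat z j| := by
                rw [abs_mul, abs_two]; ring
      _ = 2 * (c * (1 + ‖z‖)) * ∑ j, |tanhNet κ n θ z n j - fhat z j| := by
          rw [Finset.mul_sum]
  have h2 : T ^ 2 ≤ (κ n : ℝ) * ∑ j, (tanhNet κ n θ z n j - fhat z j) ^ 2 := by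
    rw [hT]
    have h := sq_sum_le_card_mul_sum_sq
      (s := (Finset.univ : Finset (Fin (κ n)))) (f := fun j => |tanhNet κ n θ z n j - fhat z j|)
    simpa [sq_abs] using h
  have h3 : ∑ j, (tanhNet κ n θ z n j - fhat z j) ^ 2
      ≤ (κ n : ℝ) * (2 * (c * (1 + ‖z‖)) ^ 2) + 2 * F z := by
    calc ∑ j, (tanhNet κ n θ z n j - fhat z j) ^ 2
        ≤ ∑ j : Fin (κ n), (2 * (c * (1 + ‖z‖)) ^ 2 + 2 * (fhat z j) ^ 2) := by
          apply Finset.sum_le_sum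
          intro j _
          have hv := hval j z
          have habs := abs_le.mp hv
          have hu2 : (tanhNet κ n θ z n j) ^ 2 ≤ (c * (1 + ‖z‖)) ^ 2 :=
            sq_le_sq' habs.1 habs.2
          nlinarith [hu2, sq_nonneg (tanhNet κ n θ z n j + fhat z j)]
      _ = (κ n : ℝ) * (2 * (c * (1 + ‖z‖)) ^ 2) + 2 * F z := by
          simp only [hF]
          rw [Finset.sum_add_distrib, Finset.sum_const, Finset.card_univ, Fintype.card_fin,
            nsmul_eq_mul, Finset.mul_sum]
  have hz1 : ‖z‖ ≤ ∑ k, |z k| := by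
    apply (pi_norm_le_iff_of_nonneg (Finset.sum_nonneg fun k _ => abs_nonneg (z k))).mpr
    intro i
    rw [Real.norm_eq_abs]
    exact Finset.single_le_sum (fun k _ => abs_nonneg (z k)) (Finset.mem_univ i)
  have hz2 : (∑ k, |z k|) ^ 2 ≤ K0 * S z := by
    have h := sq_sum_le_card_mul_sum_sq
      (s := (Finset.univ : Finset (Fin (κ 0)))) (f := fun k => |z k|)
    simp only [hS, hK0]
    simpa [sq_abs] using h
  have hzS : ‖z‖ ^ 2 ≤ K0 * S z :=
    le_trans (pow_le_pow_left₀ hz hz1 2) hz2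
  have hP : (1 + ‖z‖) ^ 2 ≤ 2 + 2 * (K0 * S z) := by nlinarith [hz, hzS, sq_nonneg (1 - ‖z‖)]
  have hPnn : (0:ℝ) ≤ (1 + ‖z‖) ^ 2 := by positivity
  calc ‖DL z‖ ^ 2
      ≤ (2 * (c * (1 + ‖z‖)) * T) ^ 2 := pow_le_pow_left₀ (norm_nonneg _) h1 2
    _ = 4 * (c * (1 + ‖z‖)) ^ 2 * T ^ 2 := by ring
    _ ≤ 4 * (c * (1 + ‖z‖)) ^ 2
        * ((κ n : ℝ) * ∑ j, (tanhNet κ n θ z n j - fhat z j) ^ 2) := by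
        apply mul_le_mul_of_nonneg_left h2 (by positivity)
    _ ≤ 4 * (c * (1 + ‖z‖)) ^ 2
        * ((κ n : ℝ) * ((κ n : ℝ) * (2 * (c * (1 + ‖z‖)) ^ 2) + 2 * F z)) := by
        apply mul_le_mul_of_nonneg_left _ (by positivity)
        exact mul_le_mul_of_nonneg_left h3 (Nat.cast_nonneg _)
    _ = A * ((1 + ‖z‖) ^ 2) ^ 2 + B * ((1 + ‖z‖) ^ 2 * F z) := by
        rw [hA, hB]; ring
    _ ≤ A * (2 + 2 * (K0 * S z)) ^ 2 + B * ((2 + 2 * (K0 * S z)) * F z) := by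
        apply add_le_add
        · exact mul_le_mul_of_nonneg_left (pow_le_pow_left₀ hPnn hP 2) hAnn
        · exact mul_le_mul_of_nonneg_left
            (mul_le_mul_of_nonneg_right hP (hFnn z)) hBnn
    _ = H z := by
        simp only [hH]; ring
end
end

section
/- In the tanh-network setting, the expected loss θ ↦ E_z[f(θ, z)] is Lipschitz continuous on Θ. -/
open MeasureTheory
open scoped BigOperators

noncomputable section

/-! ### Auxiliary lemmas -/

lemma aux_hasDerivAt_tanh (x : ℝ) : HasDerivAt Real.tanh (1 / Real.cosh x ^ 2) x := by
  have h : HasDerivAt (fun y => Real.sinh y / Real.cosh y)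
      ((Real.cosh x * Real.cosh x - Real.sinh x * Real.sinh x) / Real.cosh x ^ 2) x :=
    (Real.hasDerivAt_sinh x).div (Real.hasDerivAt_cosh x) (Real.cosh_pos x).ne'
  have h2 : Real.cosh x * Real.cosh x - Real.sinh x * Real.sinh x = 1 := by
    have := Real.cosh_sq_sub_sinh_sq x; nlinarith
  rw [h2] at h
  convert h using 1
  funext y
  exact Real.tanh_eq_sinh_div_cosh y

lemma aux_tanh_lipschitz : LipschitzWith 1 Real.tanh := by
  apply lipschitzWith_of_nnnorm_deriv_le (fun x => (aux_hasDerivAt_tanh x).differentiableAt)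
  intro x
  rw [(aux_hasDerivAt_tanh x).deriv, ← NNReal.coe_le_coe, coe_nnnorm, Real.norm_eq_abs]
  have h1 : (1 : ℝ) ≤ Real.cosh x ^ 2 := by nlinarith [Real.one_le_cosh x]
  rw [abs_of_nonneg (by positivity)]
  rw [show ((1 : NNReal) : ℝ) = 1 by norm_num, div_le_one (by positivity)]
  exact h1

lemma aux_tanh_dist (a b : ℝ) : |Real.tanh a - Real.tanh b| ≤ |a - b| := by
  have := aux_tanh_lipschitz.dist_le_mul a b
  simpa [Real.dist_eq] using this

lemma aux_tanh_abs_le (a : ℝ) : |Real.tanh a| ≤ |a| := by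
  simpa [Real.tanh_zero] using aux_tanh_dist a 0

lemma aux_continuous_tanh : Continuous Real.tanh := by
  have h : Real.tanh = fun y => Real.sinh y / Real.cosh y := funext Real.tanh_eq_sinh_div_cosh
  rw [h]
  exact Real.continuous_sinh.div Real.continuous_cosh fun x => (Real.cosh_pos x).ne'

lemma aux_entryW {κ : ℕ → ℕ} {n : ℕ} (θ θ' : NNParams κ n) (m : Fin n)
    (j : Fin (κ (m.1 + 1))) (l : Fin (κ m.1)) :
    |(θ m).1 j l - (θ' m).1 j l| ≤ dist θ θ' := by
  rw [← Real.dist_eq]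
  calc dist ((θ m).1 j l) ((θ' m).1 j l) ≤ dist ((θ m).1 j) ((θ' m).1 j) := dist_le_pi_dist _ _ l
    _ ≤ dist (θ m).1 (θ' m).1 := dist_le_pi_dist _ _ j
    _ ≤ dist (θ m) (θ' m) := by rw [Prod.dist_eq]; exact le_max_left _ _
    _ ≤ dist θ θ' := dist_le_pi_dist _ _ m

lemma aux_entryb {κ : ℕ → ℕ} {n : ℕ} (θ θ' : NNParams κ n) (m : Fin n)
    (j : Fin (κ (m.1 + 1))) :
    |(θ m).2 j - (θ' m).2 j| ≤ dist θ θ' := by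
  rw [← Real.dist_eq]
  calc dist ((θ m).2 j) ((θ' m).2 j) ≤ dist (θ m).2 (θ' m).2 := dist_le_pi_dist _ _ j
    _ ≤ dist (θ m) (θ' m) := by rw [Prod.dist_eq]; exact le_max_right _ _
    _ ≤ dist θ θ' := dist_le_pi_dist _ _ m

lemma aux_net_eq_pos {κ : ℕ → ℕ} {n i : ℕ} (θ : NNParams κ n) (z : Fin (κ 0) → ℝ)
    (h : i < n) (j : Fin (κ (i + 1))) :
    tanhNet κ n θ z (i + 1) j =
      (if i + 2 ≤ n then
        Real.tanh ((∑ l, (θ ⟨i, h⟩).1 j l * tanhNet κ n θ z i l) + (θ ⟨i, h⟩).2 j)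
      else ((∑ l, (θ ⟨i, h⟩).1 j l * tanhNet κ n θ z i l) + (θ ⟨i, h⟩).2 j)) := by
  rw [tanhNet]; simp [h]

lemma aux_net_eq_neg {κ : ℕ → ℕ} {n i : ℕ} (θ : NNParams κ n) (z : Fin (κ 0) → ℝ)
    (h : ¬ i < n) (j : Fin (κ (i + 1))) : tanhNet κ n θ z (i + 1) j = 0 := by
  rw [tanhNet]; simp [h]

lemma aux_net_cont {κ : ℕ → ℕ} {n : ℕ} (θ : NNParams κ n) (i : ℕ) :
    Continuous fun z => tanhNet κ n θ z i := by
  induction i with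
  | zero => exact continuous_id
  | succ i ih =>
    by_cases h : i < n
    · have heq : (fun z => tanhNet κ n θ z (i + 1)) = fun z (j : Fin (κ (i + 1))) =>
        (if i + 2 ≤ n then
          Real.tanh ((∑ l, (θ ⟨i, h⟩).1 j l * tanhNet κ n θ z i l) + (θ ⟨i, h⟩).2 j)
        else ((∑ l, (θ ⟨i, h⟩).1 j l * tanhNet κ n θ z i l) + (θ ⟨i, h⟩).2 j)) := by
        funext z j; exact aux_net_eq_pos θ z h j
      rw [heq]
      apply continuous_pi
      intro j
      have hpre : Continuous fun z =>
          (∑ l, (θ ⟨i, h⟩).1 j l * tanhNet κ n θ z i l) + (θ ⟨i, h⟩).2 j := by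
        apply Continuous.add _ continuous_const
        apply continuous_finset_sum
        intro l _
        exact continuous_const.mul ((continuous_apply l).comp ih)
      split_ifs
      · exact aux_continuous_tanh.comp hpre
      · exact hpre
    · have heq : (fun z => tanhNet κ n θ z (i + 1)) = fun _ => 0 := by
        funext z; funext j; exact aux_net_eq_neg θ z h j
      rw [heq]; exact continuous_const

/-- `M(z) = 1 + ∑ₖ |z k|`. -/
def aux_M (d : ℕ) (z : Fin d → ℝ) : ℝ := 1 + ∑ k, |z k|

lemma aux_M_one_le (d : ℕ) (z : Fin d → ℝ) : 1 ≤ aux_M d z := by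
  have : (0 : ℝ) ≤ ∑ k, |z k| := Finset.sum_nonneg fun k _ => abs_nonneg _
  unfold aux_M; linarith

lemma aux_M_nonneg (d : ℕ) (z : Fin d → ℝ) : 0 ≤ aux_M d z :=
  le_trans zero_le_one (aux_M_one_le d z)

lemma aux_M_sq_le (d : ℕ) (z : Fin d → ℝ) :
    (aux_M d z) ^ 2 ≤ (2 + 2 * (d : ℝ)) * (1 + ∑ k, (z k) ^ 2) := by
  have h1 : (∑ k, |z k|) ^ 2 ≤ (d : ℝ) * ∑ k, (z k) ^ 2 := by
    have := sq_sum_le_card_mul_sum_sq (s := (Finset.univ : Finset (Fin d)))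
      (f := fun k => |z k|)
    simpa [sq_abs] using this
  have h2 : (0 : ℝ) ≤ ∑ k, (z k) ^ 2 := Finset.sum_nonneg fun k _ => sq_nonneg _
  have h3 : (0 : ℝ) ≤ ∑ k, |z k| := Finset.sum_nonneg fun k _ => abs_nonneg _
  have h4 : (0 : ℝ) ≤ (d : ℝ) := Nat.cast_nonneg d
  unfold aux_M
  nlinarith [sq_nonneg (1 - ∑ k, |z k|)]

/-- The main induction: bound and Lipschitz estimate for the layers. -/
lemma aux_net_bound (κ : ℕ → ℕ) (n : ℕ) (R : ℝ) (hR : 0 ≤ R) (i : ℕ) :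
    ∃ B L : ℝ, 0 ≤ B ∧ 0 ≤ L ∧ ∀ (θ θ' : NNParams κ n),
      (∀ m j l, |(θ m).1 j l| ≤ R) → (∀ m j, |(θ m).2 j| ≤ R) →
      (∀ m j l, |(θ' m).1 j l| ≤ R) → (∀ m j, |(θ' m).2 j| ≤ R) →
      ∀ (z : Fin (κ 0) → ℝ) (j : Fin (κ i)),
        |tanhNet κ n θ z i j| ≤ B * aux_M (κ 0) z ∧
        |tanhNet κ n θ z i j - tanhNet κ n θ' z i j| ≤ L * aux_M (κ 0) z * dist θ θ' := by
  induction i with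
  | zero =>
    refine ⟨1, 0, zero_le_one, le_refl 0, fun θ θ' _ _ _ _ z j => ⟨?_, ?_⟩⟩
    · show |z j| ≤ 1 * aux_M (κ 0) z
      rw [one_mul]
      have h := Finset.single_le_sum (f := fun k => |z k|)
        (fun k _ => abs_nonneg _) (Finset.mem_univ j)
      unfold aux_M; linarith
    · show |z j - z j| ≤ 0 * aux_M (κ 0) z * dist θ θ'
      simp
  | succ i ih =>
    obtain ⟨B, L, hB, hL, hmain⟩ := ih
    by_cases h : i < n
    · refine ⟨R * (κ i * B + 1), (κ i) * (B + R * L) + 1, by positivity, by positivity, ?_⟩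
      intro θ θ' hW hb hW' hb' z j
      have hMz := aux_M_one_le (κ 0) z
      have hM0 := aux_M_nonneg (κ 0) z
      have hD : (0 : ℝ) ≤ dist θ θ' := dist_nonneg
      set P := (∑ l, (θ ⟨i, h⟩).1 j l * tanhNet κ n θ z i l) + (θ ⟨i, h⟩).2 j with hPdef
      set P' := (∑ l, (θ' ⟨i, h⟩).1 j l * tanhNet κ n θ' z i l) + (θ' ⟨i, h⟩).2 j with hPdef'
      have hxθ := aux_net_eq_pos θ z h j
      have hxθ' := aux_net_eq_pos θ' z h j
      have hPb : |P| ≤ (R * (κ i * B + 1)) * aux_M (κ 0) z := by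
        calc |P| ≤ |∑ l, (θ ⟨i, h⟩).1 j l * tanhNet κ n θ z i l| + |(θ ⟨i, h⟩).2 j| :=
              abs_add_le _ _
          _ ≤ (∑ l, |(θ ⟨i, h⟩).1 j l * tanhNet κ n θ z i l|) + |(θ ⟨i, h⟩).2 j| := by
              exact add_le_add_left (Finset.abs_sum_le_sum_abs _ _) _
          _ ≤ (∑ _l : Fin (κ i), R * (B * aux_M (κ 0) z)) + R * aux_M (κ 0) z := by
              apply add_le_add
              · apply Finset.sum_le_sum
                intro l _
                rw [abs_mul]
                exact mul_le_mul (hW _ _ _) (hmain θ θ' hW hb hW' hb' z l).1 (abs_nonneg _) hR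
              · calc |(θ ⟨i, h⟩).2 j| ≤ R := hb _ _
                  _ = R * 1 := (mul_one R).symm
                  _ ≤ R * aux_M (κ 0) z := mul_le_mul_of_nonneg_left hMz hR
          _ = (R * (κ i * B + 1)) * aux_M (κ 0) z := by
              rw [Finset.sum_const, Finset.card_univ, Fintype.card_fin, nsmul_eq_mul]
              ring
      have hPd : |P - P'| ≤ ((κ i) * (B + R * L) + 1) * aux_M (κ 0) z * dist θ θ' := by
        have hsplit : P - P' =
            (∑ l, ((θ ⟨i, h⟩).1 j l * tanhNet κ n θ z i l
              - (θ' ⟨i, h⟩).1 j l * tanhNet κ n θ' z i l))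
            + ((θ ⟨i, h⟩).2 j - (θ' ⟨i, h⟩).2 j) := by
          simp only [hPdef, hPdef', Finset.sum_sub_distrib]; ring
        rw [hsplit]
        calc |(∑ l, ((θ ⟨i, h⟩).1 j l * tanhNet κ n θ z i l
              - (θ' ⟨i, h⟩).1 j l * tanhNet κ n θ' z i l))
            + ((θ ⟨i, h⟩).2 j - (θ' ⟨i, h⟩).2 j)|
            ≤ (∑ l, |(θ ⟨i, h⟩).1 j l * tanhNet κ n θ z i l
              - (θ' ⟨i, h⟩).1 j l * tanhNet κ n θ' z i l|)
              + |(θ ⟨i, h⟩).2 j - (θ' ⟨i, h⟩).2 j| :=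
              le_trans (abs_add_le _ _) (add_le_add_left (Finset.abs_sum_le_sum_abs _ _) _)
          _ ≤ (∑ _l : Fin (κ i),
                (B * aux_M (κ 0) z * dist θ θ' + R * (L * aux_M (κ 0) z * dist θ θ')))
              + aux_M (κ 0) z * dist θ θ' := by
              apply add_le_add
              · apply Finset.sum_le_sum
                intro l _
                have hterm : (θ ⟨i, h⟩).1 j l * tanhNet κ n θ z i l
                    - (θ' ⟨i, h⟩).1 j l * tanhNet κ n θ' z i l
                    = ((θ ⟨i, h⟩).1 j l - (θ' ⟨i, h⟩).1 j l) * tanhNet κ n θ z i l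
                      + (θ' ⟨i, h⟩).1 j l * (tanhNet κ n θ z i l - tanhNet κ n θ' z i l) := by
                  ring
                rw [hterm]
                calc |((θ ⟨i, h⟩).1 j l - (θ' ⟨i, h⟩).1 j l) * tanhNet κ n θ z i l
                      + (θ' ⟨i, h⟩).1 j l * (tanhNet κ n θ z i l - tanhNet κ n θ' z i l)|
                    ≤ |(θ ⟨i, h⟩).1 j l - (θ' ⟨i, h⟩).1 j l| * |tanhNet κ n θ z i l|
                      + |(θ' ⟨i, h⟩).1 j l| * |tanhNet κ n θ z i l - tanhNet κ n θ' z i l| := by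
                      refine le_trans (abs_add_le _ _) ?_
                      rw [abs_mul, abs_mul]
                  _ ≤ dist θ θ' * (B * aux_M (κ 0) z)
                      + R * (L * aux_M (κ 0) z * dist θ θ') := by
                      apply add_le_add
                      · exact mul_le_mul (aux_entryW θ θ' ⟨i, h⟩ j l)
                          (hmain θ θ' hW hb hW' hb' z l).1 (abs_nonneg _) hD
                      · exact mul_le_mul (hW' _ _ _)
                          (hmain θ θ' hW hb hW' hb' z l).2 (abs_nonneg _) hR
                  _ = B * aux_M (κ 0) z * dist θ θ' + R * (L * aux_M (κ 0) z * dist θ θ') := by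
                      ring
              · calc |(θ ⟨i, h⟩).2 j - (θ' ⟨i, h⟩).2 j| ≤ dist θ θ' := aux_entryb θ θ' ⟨i, h⟩ j
                  _ = 1 * dist θ θ' := (one_mul _).symm
                  _ ≤ aux_M (κ 0) z * dist θ θ' := mul_le_mul_of_nonneg_right hMz hD
          _ = ((κ i) * (B + R * L) + 1) * aux_M (κ 0) z * dist θ θ' := by
              rw [Finset.sum_const, Finset.card_univ, Fintype.card_fin, nsmul_eq_mul]
              ring
      constructor
      · rw [hxθ]
        split_ifs
        · exact le_trans (aux_tanh_abs_le P) hPb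
        · exact hPb
      · rw [hxθ, hxθ']
        split_ifs
        · exact le_trans (aux_tanh_dist P P') hPd
        · exact hPd
    · refine ⟨0, 0, le_refl 0, le_refl 0, ?_⟩
      intro θ θ' _ _ _ _ z j
      rw [aux_net_eq_neg θ z h j, aux_net_eq_neg θ' z h j]
      simp

instance aux_stdGaussian_prob (d : ℕ) : IsProbabilityMeasure (stdGaussian d) := by
  unfold stdGaussian; infer_instance

lemma aux_stdGaussian_map_eval (d : ℕ) (k : Fin d) :
    (stdGaussian d).map (fun z => z k) = ProbabilityTheory.gaussianReal 0 1 := by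
  refine Measure.ext fun s hs => ?_
  rw [Measure.map_apply (measurable_pi_apply k) hs]
  have hpre : (fun z : Fin d → ℝ => z k) ⁻¹' s
      = Set.univ.pi (Function.update (fun _ : Fin d => (Set.univ : Set ℝ)) k s) := by
    ext z
    simp [Function.update_apply]
  rw [hpre, stdGaussian, Measure.pi_pi]
  simp [Function.update_apply, apply_ite (ProbabilityTheory.gaussianReal 0 1), measure_univ]

lemma aux_integrable_eval_comp (d : ℕ) (k : Fin d) {g : ℝ → ℝ} (hg : Measurable g)
    (hint : Integrable g (ProbabilityTheory.gaussianReal 0 1)) :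
    Integrable (fun z => g (z k)) (stdGaussian d) := by
  rw [← aux_stdGaussian_map_eval d k] at hint
  exact (integrable_map_measure hg.aestronglyMeasurable
    (measurable_pi_apply k).aemeasurable).mp hint

open Real in
lemma aux_integrable_sq_gaussian :
    Integrable (fun x : ℝ => x ^ 2) (ProbabilityTheory.gaussianReal 0 1) := by
  rw [ProbabilityTheory.gaussianReal_of_var_ne_zero 0 one_ne_zero]
  rw [integrable_withDensity_iff (ProbabilityTheory.measurable_gaussianPDF 0 1)
    (Filter.Eventually.of_forall fun x => ENNReal.ofReal_lt_top)]
  have key : Integrable (fun x : ℝ => x ^ (2 : ℝ) * Real.exp (-(1/2) * x ^ 2)) volume :=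
    integrable_rpow_mul_exp_neg_mul_sq (by norm_num) (by norm_num)
  have key2 : Integrable
      (fun x : ℝ => (√(2 * π))⁻¹ * (x ^ 2 * Real.exp (-(1/2) * x ^ 2))) volume := by
    apply Integrable.const_mul
    simpa [Real.rpow_two] using key
  apply key2.congr
  filter_upwards with x
  have hnn := ProbabilityTheory.gaussianPDFReal_nonneg 0 1 x
  simp only [ProbabilityTheory.gaussianPDF_def]
  rw [ENNReal.toReal_ofReal hnn, ProbabilityTheory.gaussianPDFReal_def]
  push_cast
  ring_nf

lemma aux_integrable_one_add_sq (d : ℕ) :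
    Integrable (fun z : Fin d → ℝ => 1 + ∑ k, (z k) ^ 2) (stdGaussian d) := by
  apply (integrable_const (1 : ℝ)).add
  apply integrable_finset_sum
  intro k _
  exact aux_integrable_eval_comp d k (measurable_id.pow_const 2) aux_integrable_sq_gaussian


/-- **Lipschitz continuity of the expected loss of the tanh network on a bounded set
(Theorem 2.4, item 3).**  The expected loss `θ ↦ E_z[f(θ,z)]` is Lipschitz continuous
on the bounded convex set `Θ`. -/
theorem stmt_9 (κ : ℕ → ℕ) (n : ℕ) (hn : 1 ≤ n)
    (fhat : (Fin (κ 0) → ℝ) → (Fin (κ n) → ℝ)) (hfhat : Measurable fhat)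
    (hmom0 : Integrable (fun z => ∑ j, (fhat z j) ^ 2) (stdGaussian (κ 0)))
    (hmom1 : ∀ k : Fin (κ 0),
      Integrable (fun z => (∑ j, (fhat z j) ^ 2) * |z k|) (stdGaussian (κ 0)))
    (hmom2 : ∀ k : Fin (κ 0),
      Integrable (fun z => (∑ j, (fhat z j) ^ 2) * |z k| ^ 2) (stdGaussian (κ 0)))
    (Θ : Set (NNParams κ n)) (hΘb : Bornology.IsBounded Θ) (hΘc : Convex ℝ Θ) :
    ∃ C : NNReal, LipschitzOnWith C
      (fun θ => ∫ z, tanhLoss κ n fhat θ z ∂(stdGaussian (κ 0))) Θ := by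
  classical
  obtain ⟨r, hr⟩ := hΘb.subset_closedBall (0 : NNParams κ n)
  set R : ℝ := max r 0 with hRdef
  have hR : 0 ≤ R := le_max_right r 0
  have hWbound : ∀ θ ∈ Θ, ∀ (m : Fin n) j l, |(θ m).1 j l| ≤ R := by
    intro θ hθ m j l
    have h0 := aux_entryW θ 0 m j l
    have h1 : dist θ (0 : NNParams κ n) ≤ r := by
      have := hr hθ; rwa [Metric.mem_closedBall] at this
    simp only [Pi.zero_apply, Prod.fst_zero, sub_zero] at h0
    calc |(θ m).1 j l| ≤ dist θ 0 := h0
      _ ≤ r := h1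
      _ ≤ R := le_max_left r 0
  have hbbound : ∀ θ ∈ Θ, ∀ (m : Fin n) j, |(θ m).2 j| ≤ R := by
    intro θ hθ m j
    have h0 := aux_entryb θ 0 m j
    have h1 : dist θ (0 : NNParams κ n) ≤ r := by
      have := hr hθ; rwa [Metric.mem_closedBall] at this
    simp only [Pi.zero_apply, Prod.snd_zero, sub_zero] at h0
    calc |(θ m).2 j| ≤ dist θ 0 := h0
      _ ≤ r := h1
      _ ≤ R := le_max_left r 0
  obtain ⟨B, L, hB, hL, hmain⟩ := aux_net_bound κ n R hR n
  -- measurability of the loss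
  have hlossmeas : ∀ θ : NNParams κ n,
      AEStronglyMeasurable (fun z => tanhLoss κ n fhat θ z) (stdGaussian (κ 0)) := by
    intro θ
    apply Measurable.aestronglyMeasurable
    apply Finset.measurable_sum
    intro j _
    exact ((((continuous_apply j).comp (aux_net_cont θ n)).measurable).sub
      ((measurable_pi_apply j).comp hfhat)).pow_const 2
  -- integrability of the loss for parameters in Θ
  have hlossint : ∀ θ ∈ Θ, Integrable (fun z => tanhLoss κ n fhat θ z) (stdGaussian (κ 0)) := by
    intro θ hθ
    have hgi : Integrable (fun z : Fin (κ 0) → ℝ =>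
        (κ n : ℝ) * (2 * (B ^ 2 * ((2 + 2 * (κ 0 : ℝ)) * (1 + ∑ k, (z k) ^ 2))))
        + 2 * ∑ j, (fhat z j) ^ 2) (stdGaussian (κ 0)) := by
      apply Integrable.add _ (hmom0.const_mul 2)
      have := (aux_integrable_one_add_sq (κ 0)).const_mul
        ((κ n : ℝ) * (2 * (B ^ 2 * (2 + 2 * (κ 0 : ℝ)))))
      apply this.congr
      filter_upwards with z
      ring
    apply Integrable.mono' hgi (hlossmeas θ)
    filter_upwards with z
    have hbz : ∀ j, |tanhNet κ n θ z n j| ≤ B * aux_M (κ 0) z := fun j =>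
      (hmain θ θ (hWbound θ hθ) (hbbound θ hθ) (hWbound θ hθ) (hbbound θ hθ) z j).1
    have hM2 := aux_M_sq_le (κ 0) z
    have hM0 := aux_M_nonneg (κ 0) z
    have hterm : ∀ j : Fin (κ n), (tanhNet κ n θ z n j - fhat z j) ^ 2
        ≤ 2 * (B ^ 2 * ((2 + 2 * (κ 0 : ℝ)) * (1 + ∑ k, (z k) ^ 2))) + 2 * (fhat z j) ^ 2 := by
      intro j
      have h1 := hbz j
      have h2 : (tanhNet κ n θ z n j) ^ 2 ≤ (B * aux_M (κ 0) z) ^ 2 := by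
        rw [← sq_abs (tanhNet κ n θ z n j)]
        exact pow_le_pow_left₀ (abs_nonneg _) h1 2
      have h3 : (B * aux_M (κ 0) z) ^ 2 ≤ B ^ 2 * ((2 + 2 * (κ 0 : ℝ)) * (1 + ∑ k, (z k) ^ 2)) := by
        have : (B * aux_M (κ 0) z) ^ 2 = B ^ 2 * (aux_M (κ 0) z) ^ 2 := by ring
        rw [this]
        exact mul_le_mul_of_nonneg_left hM2 (sq_nonneg B)
      nlinarith [sq_nonneg (tanhNet κ n θ z n j + fhat z j)]
    rw [Real.norm_eq_abs, abs_of_nonneg (Finset.sum_nonneg fun j _ => sq_nonneg _)]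
    calc (∑ j, (tanhNet κ n θ z n j - fhat z j) ^ 2)
        ≤ ∑ j : Fin (κ n), (2 * (B ^ 2 * ((2 + 2 * (κ 0 : ℝ)) * (1 + ∑ k, (z k) ^ 2)))
            + 2 * (fhat z j) ^ 2) := Finset.sum_le_sum fun j _ => hterm j
      _ = (κ n : ℝ) * (2 * (B ^ 2 * ((2 + 2 * (κ 0 : ℝ)) * (1 + ∑ k, (z k) ^ 2))))
            + 2 * ∑ j, (fhat z j) ^ 2 := by
          rw [Finset.sum_add_distrib, Finset.sum_const, Finset.card_univ, Fintype.card_fin,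
            nsmul_eq_mul, ← Finset.mul_sum]
  -- the dominating function for the Lipschitz estimate
  set g : (Fin (κ 0) → ℝ) → ℝ := fun z =>
    (κ n : ℝ) * (L * (2 * B + 1)) * ((2 + 2 * (κ 0 : ℝ)) * (1 + ∑ k, (z k) ^ 2))
    + L * ∑ j, (fhat z j) ^ 2 with hgdef
  have hgint : Integrable g (stdGaussian (κ 0)) := by
    apply Integrable.add _ (hmom0.const_mul L)
    have := (aux_integrable_one_add_sq (κ 0)).const_mul
      ((κ n : ℝ) * (L * (2 * B + 1)) * (2 + 2 * (κ 0 : ℝ)))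
    apply this.congr
    filter_upwards with z
    ring
  -- the pointwise Lipschitz estimate
  have hdiff : ∀ θ ∈ Θ, ∀ θ' ∈ Θ, ∀ z,
      |tanhLoss κ n fhat θ z - tanhLoss κ n fhat θ' z| ≤ g z * dist θ θ' := by
    intro θ hθ θ' hθ' z
    have hm := hmain θ θ' (hWbound θ hθ) (hbbound θ hθ) (hWbound θ' hθ') (hbbound θ' hθ') z
    have hMz := aux_M_one_le (κ 0) z
    have hM0 := aux_M_nonneg (κ 0) z
    have hM2 := aux_M_sq_le (κ 0) z
    have hD : (0 : ℝ) ≤ dist θ θ' := dist_nonneg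
    have hterm : ∀ j : Fin (κ n),
        |(tanhNet κ n θ z n j - fhat z j) ^ 2 - (tanhNet κ n θ' z n j - fhat z j) ^ 2|
        ≤ (L * (2 * B + 1) * (aux_M (κ 0) z) ^ 2 + L * (fhat z j) ^ 2) * dist θ θ' := by
      intro j
      set a := tanhNet κ n θ z n j
      set b := tanhNet κ n θ' z n j
      set c := fhat z j
      have h1 : |a| ≤ B * aux_M (κ 0) z := (hm j).1
      have h2 : |b| ≤ B * aux_M (κ 0) z := by
        have := (hmain θ' θ (hWbound θ' hθ') (hbbound θ' hθ') (hWbound θ hθ) (hbbound θ hθ) z j).1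
        exact this
      have h3 : |a - b| ≤ L * aux_M (κ 0) z * dist θ θ' := (hm j).2
      have key : |(a - c) ^ 2 - (b - c) ^ 2| = |a - b| * |a + b - 2 * c| := by
        rw [← abs_mul]
        congr 1
        ring
      have e1 : |a + b - 2 * c| ≤ |a| + |b| + 2 * |c| := by
        calc |a + b - 2 * c| = |(a + b) + -(2 * c)| := by ring_nf
          _ ≤ |a + b| + |-(2 * c)| := abs_add_le _ _
          _ = |a + b| + 2 * |c| := by rw [abs_neg, abs_mul]; norm_num
          _ ≤ |a| + |b| + 2 * |c| := by linarith [abs_add_le a b]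
      calc |(a - c) ^ 2 - (b - c) ^ 2| = |a - b| * |a + b - 2 * c| := key
        _ ≤ (L * aux_M (κ 0) z * dist θ θ') * (|a| + |b| + 2 * |c|) :=
            mul_le_mul h3 e1 (abs_nonneg _) (by positivity)
        _ ≤ (L * aux_M (κ 0) z * dist θ θ') * (2 * (B * aux_M (κ 0) z) + 2 * |c|) := by
            apply mul_le_mul_of_nonneg_left _ (by positivity)
            linarith
        _ ≤ (L * (2 * B + 1) * (aux_M (κ 0) z) ^ 2 + L * c ^ 2) * dist θ θ' := by
            rw [show c ^ 2 = |c| ^ 2 from (sq_abs c).symm]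
            nlinarith [mul_nonneg (mul_nonneg hL hD) (sq_nonneg (aux_M (κ 0) z - |c|))]
    unfold tanhLoss
    rw [← Finset.sum_sub_distrib]
    calc |∑ j, ((tanhNet κ n θ z n j - fhat z j) ^ 2 - (tanhNet κ n θ' z n j - fhat z j) ^ 2)|
        ≤ ∑ j, |(tanhNet κ n θ z n j - fhat z j) ^ 2 - (tanhNet κ n θ' z n j - fhat z j) ^ 2| :=
          Finset.abs_sum_le_sum_abs _ _
      _ ≤ ∑ j : Fin (κ n), ((L * (2 * B + 1) * (aux_M (κ 0) z) ^ 2 + L * (fhat z j) ^ 2)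
            * dist θ θ') := Finset.sum_le_sum fun j _ => hterm j
      _ = ((κ n : ℝ) * (L * (2 * B + 1) * (aux_M (κ 0) z) ^ 2) + L * ∑ j, (fhat z j) ^ 2)
            * dist θ θ' := by
          rw [← Finset.sum_mul, Finset.sum_add_distrib, Finset.sum_const, Finset.card_univ,
            Fintype.card_fin, nsmul_eq_mul, ← Finset.mul_sum]
      _ ≤ g z * dist θ θ' := by
          apply mul_le_mul_of_nonneg_right _ hD
          simp only [hgdef]
          have : (κ n : ℝ) * (L * (2 * B + 1) * (aux_M (κ 0) z) ^ 2)
              ≤ (κ n : ℝ) * (L * (2 * B + 1)) * ((2 + 2 * (κ 0 : ℝ)) * (1 + ∑ k, (z k) ^ 2)) := by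
            rw [show (κ n : ℝ) * (L * (2 * B + 1) * (aux_M (κ 0) z) ^ 2)
                = ((κ n : ℝ) * (L * (2 * B + 1))) * (aux_M (κ 0) z) ^ 2 by ring]
            exact mul_le_mul_of_nonneg_left hM2 (by positivity)
          linarith
  refine ⟨(∫ z, g z ∂(stdGaussian (κ 0))).toNNReal, ?_⟩
  rw [lipschitzOnWith_iff_dist_le_mul]
  intro θ hθ θ' hθ'
  rw [Real.dist_eq, ← integral_sub (hlossint θ hθ) (hlossint θ' hθ')]
  calc |∫ z, (tanhLoss κ n fhat θ z - tanhLoss κ n fhat θ' z) ∂(stdGaussian (κ 0))|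
      ≤ ∫ z, |tanhLoss κ n fhat θ z - tanhLoss κ n fhat θ' z| ∂(stdGaussian (κ 0)) := by
        simpa [Real.norm_eq_abs] using norm_integral_le_integral_norm
          (μ := stdGaussian (κ 0)) (fun z => tanhLoss κ n fhat θ z - tanhLoss κ n fhat θ' z)
    _ ≤ ∫ z, g z * dist θ θ' ∂(stdGaussian (κ 0)) := by
        apply integral_mono_of_nonneg (Filter.Eventually.of_forall fun z => abs_nonneg _)
          (hgint.mul_const _)
        exact Filter.Eventually.of_forall fun z => hdiff θ hθ θ' hθ' z
    _ = (∫ z, g z ∂(stdGaussian (κ 0))) * dist θ θ' := integral_mul_const _ _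
    _ ≤ ((∫ z, g z ∂(stdGaussian (κ 0))).toNNReal : ℝ) * dist θ θ' :=
        mul_le_mul_of_nonneg_right (Real.le_coe_toNNReal _) dist_nonneg
end
end
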